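/- arXiv:2109.08481 — 3 statements merged into one kernel-verified Lean document; each statement's English description precedes it below -/
import Mathlib

section
/- The numerical range of the n×n Jordan block with eigenvalue 0 is the closed disk centered at the origin of radius cos(π/(n+1)). -/
/-- The numerical range of a matrix `A : Matrix (Fin n) (Fin n) ℂ`. -/
noncomputable def numericalRange (n : ℕ) (A : Matrix (Fin n) (Fin n) ℂ) : Set ℂ :=
  { w : ℂ | ∃ x : EuclideanSpace ℂ (Fin n), ‖x‖ = 1 ∧
      inner ℂ (Matrix.toEuclideanLin A x) x = w }

/-- The `n × n` nilpotent Jordan block: ones on the superdiagonal, zeros elsewhere. -/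
def jordanBlock (n : ℕ) : Matrix (Fin n) (Fin n) ℂ :=
  Matrix.of fun i j => if (i : ℕ) + 1 = (j : ℕ) then 1 else 0

open Real Finset

section Aux

lemma NRJB.jordan_mulVec (n : ℕ) (v : Fin n → ℂ) (i : Fin n) :
    (jordanBlock n).mulVec v i = if h : (i : ℕ) + 1 < n then v ⟨i+1, h⟩ else 0 := by
  unfold jordanBlock Matrix.mulVec dotProduct
  simp only [Matrix.of_apply]
  split
  · next h =>
    rw [Finset.sum_eq_single ⟨(i:ℕ)+1, h⟩]
    · simp
    · intro j _ hj
      rw [if_neg, zero_mul]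
      intro hc
      exact hj (Fin.ext hc.symm)
    · simp
  · next h =>
    apply Finset.sum_eq_zero
    intro j _
    rw [if_neg, zero_mul]
    intro hc
    exact h (hc ▸ j.isLt)

lemma NRJB.inner_jordan (n : ℕ) (x : EuclideanSpace ℂ (Fin n)) :
    (inner ℂ (Matrix.toEuclideanLin (jordanBlock n) x) x : ℂ) =
      ∑ i ∈ range n, (starRingEnd ℂ) (if h : i + 1 < n then x ⟨i+1, h⟩ else 0) *
        (if h : i < n then x ⟨i, h⟩ else 0) := by
  rw [Matrix.toEuclideanLin_apply, PiLp.inner_apply]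
  rw [← Fin.sum_univ_eq_sum_range]
  apply Finset.sum_congr rfl
  intro i _
  rw [show (WithLp.toLp 2 ((jordanBlock n).mulVec x.ofLp)).ofLp i
      = (jordanBlock n).mulVec (fun j => x j) i from rfl, NRJB.jordan_mulVec]
  simp [i.isLt, mul_comm]

lemma NRJB.sin_rec (θ : ℝ) (k : ℕ) :
    sin ((k+2) * θ) + sin (k * θ) = 2 * cos θ * sin ((k+1) * θ) := by
  have h1 : ((k:ℝ)+2) * θ = ((k:ℝ)+1) * θ + θ := by ring
  have h2 : (k:ℝ) * θ = ((k:ℝ)+1) * θ - θ := by ring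
  rw [h1, h2, sin_add, sin_sub]; ring

lemma NRJB.sin_pos' (n k : ℕ) (hk1 : 1 ≤ k) (hkn : k ≤ n) :
    0 < sin (k * (π / (n+1))) := by
  apply sin_pos_of_pos_of_lt_pi
  · have : (1:ℝ) ≤ k := by exact_mod_cast hk1
    have : (0:ℝ) < (n:ℝ)+1 := by positivity
    positivity
  · have hk : (k:ℝ) < (n:ℝ)+1 := by exact_mod_cast Nat.lt_succ_of_le hkn
    calc (k:ℝ) * (π / (n+1)) < ((n:ℝ)+1) * (π / (n+1)) := by
          apply mul_lt_mul_of_pos_right hk; positivity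
      _ = π := by field_simp

lemma NRJB.sin_top (n : ℕ) : sin ((n+1) * (π / (n+1))) = 0 := by
  have : ((n:ℝ)+1) * (π / (n+1)) = π := by field_simp
  rw [this, sin_pi]

lemma NRJB.shift_sum (f : ℕ → ℝ) (n : ℕ) (h0 : f 0 = 0) (hn : f n = 0) :
    ∑ i ∈ range n, f (i+1) = ∑ i ∈ range n, f i := by
  have h := Finset.sum_range_succ' f n
  rw [Finset.sum_range_succ f n] at h
  linarith

lemma NRJB.sum_sin_eq (n : ℕ) :
    ∑ i ∈ range n, sin ((i+1) * (π/(n+1))) * sin ((i+2) * (π/(n+1)))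
      = cos (π/(n+1)) * ∑ i ∈ range n, sin ((i+1) * (π/(n+1))) ^ 2 := by
  set θ := π/(n+1) with hθ
  have hB : ∑ i ∈ range n, sin ((i:ℝ) * θ) * sin ((i+1) * θ)
      = ∑ i ∈ range n, sin ((i+1) * θ) * sin ((i+2) * θ) := by
    rw [← NRJB.shift_sum (fun i => sin ((i:ℝ) * θ) * sin (((i:ℝ)+1) * θ)) n]
    · apply Finset.sum_congr rfl; intro i _; push_cast; ring_nf
    · simp
    · simp only [hθ]
      rw [NRJB.sin_top n, mul_zero]
  have hrec : ∀ i ∈ range n, sin ((i+1) * θ) * (sin ((i+2) * θ) + sin ((i:ℝ) * θ))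
      = 2 * cos θ * sin ((i+1) * θ) ^ 2 := by
    intro i _
    have h := NRJB.sin_rec θ i
    push_cast at h ⊢
    rw [h]; ring
  have hsum : ∑ i ∈ range n, sin ((i+1) * θ) * (sin ((i+2) * θ) + sin ((i:ℝ) * θ))
      = 2 * cos θ * ∑ i ∈ range n, sin ((i+1) * θ) ^ 2 := by
    rw [Finset.mul_sum]
    exact Finset.sum_congr rfl hrec
  have expand : ∑ i ∈ range n, sin ((i+1) * θ) * (sin ((i+2) * θ) + sin ((i:ℝ) * θ))
      = ∑ i ∈ range n, sin ((i+1) * θ) * sin ((i+2) * θ)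
        + ∑ i ∈ range n, sin ((i:ℝ) * θ) * sin ((i+1) * θ) := by
    rw [← Finset.sum_add_distrib]
    apply Finset.sum_congr rfl; intro i _; ring
  rw [hB] at expand
  rw [Finset.mul_sum] at hsum ⊢
  rw [expand] at hsum
  have h2 : ∑ i ∈ range n, 2 * cos θ * sin ((i+1)*θ)^2
      = 2 * ∑ i ∈ range n, cos θ * sin ((i+1)*θ)^2 := by
    rw [Finset.mul_sum]
    apply Finset.sum_congr rfl; intro i _; ring
  rw [h2] at hsum
  linarith [hsum]

lemma NRJB.sum_le (n : ℕ) (a : ℕ → ℝ) (ha : ∀ i, 0 ≤ a i) (han : a n = 0) :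
    ∑ i ∈ range n, a i * a (i+1) ≤ cos (π/(n+1)) * ∑ i ∈ range n, (a i)^2 := by
  set θ := π/(n+1) with hθ
  set S : ℕ → ℝ := fun k => sin (k * θ) with hS
  have step1 : ∀ i ∈ range n, a i * a (i+1)
      ≤ S (i+2) / (2 * S (i+1)) * (a i)^2 + S (i+1) / (2 * S (i+2)) * (a (i+1))^2 := by
    intro i hi
    rw [Finset.mem_range] at hi
    by_cases hlt : i + 1 < n
    · have h1 : 0 < S (i+1) := by
        simpa [hS] using NRJB.sin_pos' n (i+1) (by omega) (by omega)
      have h2 : 0 < S (i+2) := by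
        simpa [hS] using NRJB.sin_pos' n (i+2) (by omega) (by omega)
      set u := S (i+2) / (2 * S (i+1)) with hu
      set v := S (i+1) / (2 * S (i+2)) with hv
      have hupos : 0 < u := by positivity
      have huv : u * v = 1/4 := by
        rw [hu, hv]; field_simp; ring
      nlinarith [sq_nonneg (2*u*a i - a (i+1)), ha i, ha (i+1), hupos, huv]
    · have hin : i + 1 = n := by omega
      have hz : a (i+1) = 0 := by rw [hin, han]
      have hS2 : S (i+2) = 0 := by
        rw [hS]
        have : (i:ℕ) + 2 = n + 1 := by omega
        rw [this]
        push_cast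
        exact NRJB.sin_top n
      rw [hz, hS2]
      simp
  have step2 : ∑ i ∈ range n, (S (i+2) / (2 * S (i+1)) * (a i)^2
        + S (i+1) / (2 * S (i+2)) * (a (i+1))^2)
      = cos θ * ∑ i ∈ range n, (a i)^2 := by
    rw [Finset.sum_add_distrib]
    have hshift : ∑ i ∈ range n, S (i+1) / (2 * S (i+2)) * (a (i+1))^2
        = ∑ i ∈ range n, S i / (2 * S (i+1)) * (a i)^2 := by
      exact NRJB.shift_sum (fun j => S j / (2 * S (j+1)) * (a j)^2) n
        (by simp [hS]) (by simp [han])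
    rw [hshift, ← Finset.sum_add_distrib, Finset.mul_sum]
    apply Finset.sum_congr rfl
    intro i hi
    rw [Finset.mem_range] at hi
    have h1 : 0 < S (i+1) := by
      simpa [hS] using NRJB.sin_pos' n (i+1) (by omega) (by omega)
    have hrec : S (i+2) + S i = 2 * cos θ * S (i+1) := by
      simpa [hS] using NRJB.sin_rec θ i
    rw [div_mul_eq_mul_div, div_mul_eq_mul_div, div_add_div _ _ (by positivity) (by positivity)]
    rw [div_eq_iff (by positivity)]
    linear_combination (a i ^ 2 * 2 * S (i+1)) * hrec
  calc ∑ i ∈ range n, a i * a (i+1)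
      ≤ ∑ i ∈ range n, (S (i+2) / (2 * S (i+1)) * (a i)^2
          + S (i+1) / (2 * S (i+2)) * (a (i+1))^2) := Finset.sum_le_sum step1
    _ = cos θ * ∑ i ∈ range n, (a i)^2 := step2

lemma NRJB.exists_profile (n : ℕ) (hn : 0 < n) (ρ : ℝ) (hρ0 : 0 ≤ ρ)
    (hρ : ρ ≤ cos (π/(n+1))) :
    ∃ a : ℕ → ℝ, (∀ i, 0 ≤ a i) ∧ (∀ i, n ≤ i → a i = 0) ∧
      (∑ i ∈ range n, (a i)^2 = 1) ∧ (∑ i ∈ range n, a i * a (i+1) = ρ) := by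
  set θ := π/(n+1) with hθ
  set b : ℝ → ℕ → ℝ := fun t i =>
    if i < n then (1-t) * (if i = 0 then 1 else 0) + t * sin ((i+1) * θ) else 0 with hb
  set N : ℝ → ℝ := fun t => ∑ i ∈ range n, b t i * b t (i+1) with hN
  set D : ℝ → ℝ := fun t => ∑ i ∈ range n, (b t i)^2 with hD
  have hbcont : ∀ i, Continuous (fun t => b t i) := by
    intro i
    simp only [hb]
    by_cases h : i < n <;> by_cases h0 : i = 0 <;> simp [h, h0, hn] <;> fun_prop
  have hNcont : Continuous N := by
    apply continuous_finset_sum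
    intro i _
    exact (hbcont i).mul (hbcont (i+1))
  have hDcont : Continuous D := by
    apply continuous_finset_sum
    intro i _
    exact (hbcont i).pow 2
  have hbnonneg : ∀ t ∈ Set.Icc (0:ℝ) 1, ∀ i, 0 ≤ b t i := by
    intro t ht i
    simp only [hb]
    split
    · next h =>
      have hs : 0 ≤ sin ((i+1) * θ) := le_of_lt (by
        have := NRJB.sin_pos' n (i+1) (by omega) (by omega)
        push_cast at this
        simpa [hθ] using this)
      split <;> nlinarith [ht.1, ht.2]
    · exact le_refl 0
  have hb0 : ∀ t ∈ Set.Icc (0:ℝ) 1, 0 < b t 0 := by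
    intro t ht
    have hs : 0 < sin (1 * θ) := by
      have := NRJB.sin_pos' n 1 le_rfl hn
      push_cast at this
      simpa [hθ] using this
    have hs1 : sin (1 * θ) ≤ 1 := sin_le_one _
    simp only [hb, if_pos hn, if_pos rfl]
    norm_num at hs hs1 ⊢
    nlinarith [ht.1, ht.2, hs, hs1]
  have hDpos : ∀ t ∈ Set.Icc (0:ℝ) 1, 0 < D t := by
    intro t ht
    have h0 : (b t 0)^2 ≤ D t := by
      apply Finset.single_le_sum (f := fun i => (b t i)^2)
      · intro i _; positivity
      · exact Finset.mem_range.mpr hn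
    nlinarith [hb0 t ht]
  have hN0 : N 0 = 0 := by
    apply Finset.sum_eq_zero
    intro i _
    have : b 0 (i+1) = 0 := by simp [hb]
    rw [this, mul_zero]
  have hN1 : N 1 = cos θ * D 1 := by
    have h1 : ∀ i ∈ range n, b 1 i * b 1 (i+1) = sin ((i+1)*θ) * sin ((i+2)*θ) := by
      intro i hi
      rw [Finset.mem_range] at hi
      by_cases h : i + 1 < n
      · simp only [hb, if_pos hi, if_pos h]
        norm_num
        left; congr 1; ring
      · have hin : i + 1 = n := by omega
        have : sin (((i:ℝ)+2) * θ) = 0 := by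
          have := NRJB.sin_top n
          rw [hθ]
          rw [show ((i:ℝ)+2) = ((n:ℝ)+1) by push_cast [← hin]; ring]
          exact this
        simp [hb, h, this]
    have h2 : ∀ i ∈ range n, (b 1 i)^2 = sin ((i+1)*θ)^2 := by
      intro i hi
      rw [Finset.mem_range] at hi
      simp only [hb, if_pos hi]
      norm_num
    rw [hN, hD]
    simp only
    rw [Finset.sum_congr rfl h1, Finset.sum_congr rfl h2]
    exact NRJB.sum_sin_eq n
  have hg : ContinuousOn (fun t => N t / D t) (Set.Icc 0 1) := by
    apply ContinuousOn.div hNcont.continuousOn hDcont.continuousOn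
    intro t ht
    exact ne_of_gt (hDpos t ht)
  have hmem : ρ ∈ Set.Icc (N 0 / D 0) (N 1 / D 1) := by
    constructor
    · rw [hN0, zero_div]; exact hρ0
    · rw [hN1, mul_div_assoc, div_self (ne_of_gt (hDpos 1 (by norm_num))), mul_one]
      exact hρ
  obtain ⟨t, ht, hgt⟩ := intermediate_value_Icc (by norm_num : (0:ℝ) ≤ 1) hg hmem
  refine ⟨fun i => b t i / Real.sqrt (D t), ?_, ?_, ?_, ?_⟩
  · intro i
    by_cases h : i < n
    · exact div_nonneg (hbnonneg t ht i) (Real.sqrt_nonneg _)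
    · simp [hb, h]
  · intro i hi
    simp [hb, Nat.not_lt.mpr hi]
  · have hDt := hDpos t ht
    have hsq : Real.sqrt (D t) ^ 2 = D t := Real.sq_sqrt (le_of_lt hDt)
    show ∑ i ∈ range n, (b t i / Real.sqrt (D t))^2 = 1
    have heq : ∑ i ∈ range n, (b t i / Real.sqrt (D t))^2
        = (∑ i ∈ range n, (b t i)^2) / (Real.sqrt (D t))^2 := by
      rw [Finset.sum_div]
      apply Finset.sum_congr rfl
      intro i _
      rw [div_pow]
    rw [heq, hsq]
    exact div_self (ne_of_gt hDt)
  · have hDt := hDpos t ht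
    have hms : Real.sqrt (D t) * Real.sqrt (D t) = D t := Real.mul_self_sqrt (le_of_lt hDt)
    show ∑ i ∈ range n, (b t i / Real.sqrt (D t)) * (b t (i+1) / Real.sqrt (D t)) = ρ
    have heq : ∑ i ∈ range n, (b t i / Real.sqrt (D t)) * (b t (i+1) / Real.sqrt (D t))
        = (∑ i ∈ range n, b t i * b t (i+1)) / (Real.sqrt (D t) * Real.sqrt (D t)) := by
      rw [Finset.sum_div]
      apply Finset.sum_congr rfl
      intro i _
      rw [div_mul_div_comm]
    rw [heq, hms]
    exact hgt

end Aux

/-- The numerical range of the `n × n` Jordan block with eigenvalue `0` is the closed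
disk centered at the origin of radius `cos (π / (n + 1))`. -/
theorem numericalRange_jordanBlock (n : ℕ) (hn : 0 < n) :
    numericalRange n (jordanBlock n) =
      Metric.closedBall (0 : ℂ) (Real.cos (Real.pi / (n + 1))) := by
  ext w
  rw [Metric.mem_closedBall, dist_zero_right]
  constructor
  · rintro ⟨x, hx, hw⟩
    set y : ℕ → ℂ := fun k => if h : k < n then x ⟨k, h⟩ else 0 with hy
    set a : ℕ → ℝ := fun k => ‖y k‖ with ha
    have hwsum : w = ∑ i ∈ range n, (starRingEnd ℂ) (y (i+1)) * y i := by
      rw [← hw, NRJB.inner_jordan]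
    have hsumsq : ∑ i ∈ range n, (a i)^2 = 1 := by
      have hnorm : ∑ i : Fin n, ‖x i‖^2 = 1 := by
        have := EuclideanSpace.norm_eq x
        rw [hx] at this
        have h2 : Real.sqrt (∑ i : Fin n, ‖x i‖^2) = 1 := this.symm
        exact Real.sqrt_eq_one.mp h2
      rw [← Fin.sum_univ_eq_sum_range (fun k => (a k)^2) n]
      rw [← hnorm]
      apply Finset.sum_congr rfl
      intro i _
      simp [ha, hy, i.isLt]
    have hbound : ‖w‖ ≤ ∑ i ∈ range n, a i * a (i+1) := by
      rw [hwsum]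
      refine le_trans (norm_sum_le _ _) ?_
      apply Finset.sum_le_sum
      intro i _
      rw [norm_mul, RCLike.norm_conj]
      rw [ha]
      exact le_of_eq (mul_comm _ _)
    have hle := NRJB.sum_le n a (fun i => norm_nonneg _) (by simp [ha, hy])
    rw [hsumsq, mul_one] at hle
    exact le_trans hbound hle
  · intro hw
    obtain ⟨a, hann, hazero, hasum, haprod⟩ :=
      NRJB.exists_profile n hn ‖w‖ (norm_nonneg w) hw
    set u : ℂ := if w = 0 then 1 else w / ‖w‖ with hu
    have hnu : ‖u‖ = 1 := by
      rw [hu]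
      split
      · simp
      · next h =>
        have hne : ‖w‖ ≠ 0 := norm_ne_zero_iff.mpr h
        rw [norm_div, Complex.norm_real, Real.norm_eq_abs, abs_of_nonneg (norm_nonneg w)]
        exact div_self hne
    have hwu : (‖w‖ : ℂ) * u = w := by
      rw [hu]
      split
      · next h => simp [h]
      · next h =>
        rw [mul_div_assoc']
        rw [mul_comm, mul_div_assoc]
        rw [div_self (by exact_mod_cast Complex.ofReal_ne_zero.mpr (norm_ne_zero_iff.mpr h))]
        simp
    have hucu : u * (starRingEnd ℂ) u = 1 := by
      rw [Complex.mul_conj]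
      rw [Complex.normSq_eq_norm_sq]
      rw [hnu]
      norm_num
    set cu : ℂ := (starRingEnd ℂ) u with hcu
    refine ⟨(WithLp.equiv 2 (Fin n → ℂ)).symm (fun i => (a (i:ℕ) : ℂ) * cu ^ (i:ℕ)), ?_, ?_⟩
    · rw [EuclideanSpace.norm_eq]
      have : ∀ i : Fin n, ‖((a (i:ℕ) : ℂ) * cu ^ (i:ℕ))‖^2 = (a (i:ℕ))^2 := by
        intro i
        rw [norm_mul, norm_pow, hcu, RCLike.norm_conj, hnu, one_pow, mul_one,
          Complex.norm_real, Real.norm_eq_abs, sq_abs]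
      have hsum : ∑ i : Fin n, ‖((a (i:ℕ) : ℂ) * cu ^ (i:ℕ))‖^2 = 1 := by
        rw [Fintype.sum_congr _ _ this]
        rw [Fin.sum_univ_eq_sum_range (fun k => (a k)^2) n]
        exact hasum
      rw [show ∑ i : Fin n, ‖(WithLp.equiv 2 (Fin n → ℂ)).symm
          (fun i => (a (i:ℕ) : ℂ) * cu ^ (i:ℕ)) i‖^2
        = ∑ i : Fin n, ‖((a (i:ℕ) : ℂ) * cu ^ (i:ℕ))‖^2 from rfl]
      rw [hsum]
      exact Real.sqrt_one
    · rw [NRJB.inner_jordan]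
      have hyval : ∀ k : ℕ, (if h : k < n then
          ((WithLp.equiv 2 (Fin n → ℂ)).symm (fun i => (a (i:ℕ) : ℂ) * cu ^ (i:ℕ))) ⟨k, h⟩ else 0)
          = (a k : ℂ) * cu ^ k := by
        intro k
        split
        · rfl
        · next h =>
          rw [hazero k (Nat.not_lt.mp h)]
          simp
      have hterm : ∀ i ∈ range n,
          (starRingEnd ℂ) ((a (i+1) : ℂ) * cu ^ (i+1)) * ((a i : ℂ) * cu ^ i)
            = ((a i * a (i+1) : ℝ) : ℂ) * u := by
        intro i _
        rw [map_mul, map_pow, hcu, Complex.conj_conj, Complex.conj_ofReal]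
        have hpow : u ^ (i+1) * (starRingEnd ℂ u) ^ i = u := by
          rw [pow_succ', mul_assoc, ← mul_pow, hucu, one_pow, mul_one]
        push_cast
        calc (a (i+1) : ℂ) * u ^ (i+1) * ((a i : ℂ) * (starRingEnd ℂ u) ^ i)
            = (a i : ℂ) * (a (i+1) : ℂ) * (u ^ (i+1) * (starRingEnd ℂ u) ^ i) := by ring
          _ = (a i : ℂ) * (a (i+1) : ℂ) * u := by rw [hpow]
      calc ∑ i ∈ range n, (starRingEnd ℂ) (if h : i + 1 < n then
            ((WithLp.equiv 2 (Fin n → ℂ)).symm (fun i => (a (i:ℕ) : ℂ) * cu ^ (i:ℕ))) ⟨i+1, h⟩ else 0) *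
            (if h : i < n then
            ((WithLp.equiv 2 (Fin n → ℂ)).symm (fun i => (a (i:ℕ) : ℂ) * cu ^ (i:ℕ))) ⟨i, h⟩ else 0)
          = ∑ i ∈ range n, ((a i * a (i+1) : ℝ) : ℂ) * u := by
            apply Finset.sum_congr rfl
            intro i hi
            rw [hyval (i+1), hyval i]
            exact hterm i hi
        _ = ((∑ i ∈ range n, a i * a (i+1) : ℝ) : ℂ) * u := by
            rw [← Finset.sum_mul]
            push_cast
            rfl
        _ = (‖w‖ : ℂ) * u := by rw [haprod]
        _ = w := hwu
end

section
/- Let B be a finite Blaschke product of degree n ≥ 1. Then for every w on the unit circle, the equation B(z) = w has exactly n distinct solutions z on the unit circle. -/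
open Finset

open Polynomial in
private lemma blaschke_factor_lt {l z : ℂ} (hl : ‖l‖ < 1) (hz : ‖z‖ < 1) :
    ‖z - l‖ < ‖1 - (starRingEnd ℂ) l * z‖ := by
  have h1 : Complex.normSq (z - l) < Complex.normSq (1 - (starRingEnd ℂ) l * z) := by
    have hl2 : Complex.normSq l < 1 := by
      rw [← Complex.sq_norm]; nlinarith [norm_nonneg l]
    have hz2 : Complex.normSq z < 1 := by
      rw [← Complex.sq_norm]; nlinarith [norm_nonneg z]
    simp only [Complex.normSq_apply, Complex.sub_re, Complex.sub_im, Complex.mul_re,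
      Complex.mul_im, Complex.one_re, Complex.one_im, Complex.conj_re, Complex.conj_im] at *
    nlinarith
  have := Real.sqrt_lt_sqrt (Complex.normSq_nonneg _) h1
  rwa [← Complex.norm_def, ← Complex.norm_def] at this

private lemma blaschke_factor_gt {l z : ℂ} (hl : ‖l‖ < 1) (hz : 1 < ‖z‖) :
    ‖1 - (starRingEnd ℂ) l * z‖ < ‖z - l‖ := by
  have h1 : Complex.normSq (1 - (starRingEnd ℂ) l * z) < Complex.normSq (z - l) := by
    have hl2 : Complex.normSq l < 1 := by
      rw [← Complex.sq_norm]; nlinarith [norm_nonneg l]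
    have hz2 : 1 < Complex.normSq z := by
      rw [← Complex.sq_norm]; nlinarith [norm_nonneg z]
    simp only [Complex.normSq_apply, Complex.sub_re, Complex.sub_im, Complex.mul_re,
      Complex.mul_im, Complex.one_re, Complex.one_im, Complex.conj_re, Complex.conj_im] at *
    nlinarith
  have := Real.sqrt_lt_sqrt (Complex.normSq_nonneg _) h1
  rwa [← Complex.norm_def, ← Complex.norm_def] at this

private lemma blaschke_term_re_pos {u : ℂ} (hu : ‖u‖ < 1) :
    0 < ((1 - u)⁻¹ + (starRingEnd ℂ) u * (1 - (starRingEnd ℂ) u)⁻¹).re := by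
  have hne : (1 : ℂ) - u ≠ 0 := by
    intro h
    have : u = 1 := by linear_combination -h
    simp [this] at hu
  have key : (starRingEnd ℂ) u * (1 - (starRingEnd ℂ) u)⁻¹ = (starRingEnd ℂ) (u * (1 - u)⁻¹) := by
    simp
  rw [key, Complex.add_re, Complex.conj_re, ← Complex.add_re]
  have h2 : (1 - u)⁻¹ + u * (1-u)⁻¹ = (1 + u) / (1 - u) := by
    field_simp
  rw [h2]
  have hnsq : 0 < Complex.normSq (1 - u) := Complex.normSq_pos.2 hne
  rw [Complex.div_re, ← add_div]
  apply div_pos _ hnsq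
  have hu2 : Complex.normSq u < 1 := by
    rw [← Complex.sq_norm]; nlinarith [norm_nonneg u]
  simp only [Complex.normSq_apply, Complex.add_re, Complex.add_im, Complex.sub_re,
    Complex.sub_im, Complex.one_re, Complex.one_im] at *
  nlinarith

private lemma derivative_finset_prod {ι : Type*} [DecidableEq ι] (s : Finset ι)
    (f : ι → Polynomial ℂ) :
    Polynomial.derivative (∏ i ∈ s, f i)
      = ∑ i ∈ s, (∏ j ∈ s.erase i, f j) * Polynomial.derivative (f i) := by
  induction s using Finset.induction_on with
  | empty => simp
  | @insert a s ha ih =>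
    rw [Finset.prod_insert ha, Polynomial.derivative_mul, ih, Finset.sum_insert ha,
      Finset.erase_insert ha]
    have hsum : (∑ i ∈ s, (∏ j ∈ (insert a s).erase i, f j) * Polynomial.derivative (f i))
        = ∑ i ∈ s, f a * ((∏ j ∈ s.erase i, f j) * Polynomial.derivative (f i)) := by
      refine Finset.sum_congr rfl fun i hi => ?_
      have hia : i ≠ a := by rintro rfl; exact ha hi
      rw [Finset.erase_insert_of_ne hia.symm,
        Finset.prod_insert (fun h => ha (Finset.mem_of_mem_erase h))]
      ring
    rw [hsum, ← Finset.mul_sum]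
    ring

/-- For a finite Blaschke product `B` of degree `n ≥ 1` and any `w` on the unit circle,
the equation `B z = w` has exactly `n` distinct solutions `z` on the unit circle. -/
theorem blaschkeProduct_preimage_card (n : ℕ) (hn : 1 ≤ n) (γ : ℂ) (hγ : ‖γ‖ = 1)
    (lam : Fin n → ℂ) (hlam : ∀ k, ‖lam k‖ < 1)
    (B : ℂ → ℂ)
    (hB : ∀ z, B z = γ * ∏ k : Fin n, (z - lam k) / (1 - (starRingEnd ℂ) (lam k) * z)) :
    ∀ w : ℂ, ‖w‖ = 1 →
      ∃ S : Finset ℂ, S.card = n ∧ ∀ z : ℂ, z ∈ S ↔ (‖z‖ = 1 ∧ B z = w) := by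
  intro w hw
  classical
  open Polynomial in
  set μ : Fin n → ℂ := fun k => (starRingEnd ℂ) (lam k) with hμ
  set A : ℂ[X] := ∏ k : Fin n, (X - C (lam k)) with hA
  set D : ℂ[X] := ∏ k : Fin n, (1 - C (μ k) * X) with hD
  set P : ℂ[X] := C γ * A - C w * D with hP
  have hγ0 : γ ≠ 0 := by intro h; simp [h] at hγ
  have hw0 : w ≠ 0 := by intro h; simp [h] at hw
  have hμabs : ∀ k, ‖μ k‖ < 1 := by
    intro k; simpa [hμ] using hlam k
  have hfdeg : ∀ k : Fin n, ((1 : ℂ[X]) - C (μ k) * X).natDegree ≤ 1 := by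
    intro k
    refine le_trans (natDegree_sub_le _ _) ?_
    simp only [natDegree_one, max_le_iff]
    exact ⟨Nat.zero_le _, le_trans (natDegree_C_mul_le _ _) (by simp)⟩
  -- evaluations
  have evA : ∀ z, A.eval z = ∏ k : Fin n, (z - lam k) := by
    intro z; simp [hA, eval_prod]
  have evD : ∀ z, D.eval z = ∏ k : Fin n, (1 - μ k * z) := by
    intro z; simp [hD, eval_prod]
  have evP : ∀ z, P.eval z = γ * ∏ k : Fin n, (z - lam k) - w * ∏ k : Fin n, (1 - μ k * z) := by
    intro z; simp [hP, evA, evD]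
  -- denominator factors do not vanish on the closed disk
  have hbne : ∀ z : ℂ, ‖z‖ ≤ 1 → ∀ k, (1 : ℂ) - μ k * z ≠ 0 := by
    intro z hz k h
    have h1 : μ k * z = 1 := by linear_combination -h
    have := congrArg (‖·‖) h1
    rw [norm_mul, norm_one] at this
    nlinarith [hμabs k, norm_nonneg z, norm_nonneg (μ k)]
  -- degrees
  have hAdeg : A.natDegree = n := by
    rw [hA, natDegree_prod]
    · simp
    · intro k _; exact X_sub_C_ne_zero _
  have hAmonic : A.Monic := monic_prod_of_monic _ _ fun k _ => monic_X_sub_C _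
  have hAcoeff : A.coeff n = 1 := by
    have := hAmonic.coeff_natDegree
    rwa [hAdeg] at this
  have hDdegle : D.natDegree ≤ n := by
    refine le_trans (natDegree_prod_le _ _) ?_
    have h := Finset.sum_le_sum (s := (univ : Finset (Fin n)))
      (g := fun _ => (1:ℕ)) (fun k _ => hfdeg k)
    simpa using h
  have hDcoeff : D.coeff n = ∏ k : Fin n, (-μ k) := by
    have h := coeff_prod_of_natDegree_le (s := (univ : Finset (Fin n)))
      (fun k => ((1 : ℂ[X]) - C (μ k) * X)) 1 (fun k _ => hfdeg k)
    rw [hD]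
    simp only [card_univ, Fintype.card_fin, mul_one] at h
    rw [h]
    refine Finset.prod_congr rfl fun k _ => ?_
    simp [coeff_one]
  -- product of |lam k| is < 1
  have hprodlt : ∏ k : Fin n, ‖lam k‖ < 1 := by
    have i0 : Fin n := ⟨0, hn⟩
    rw [← Finset.mul_prod_erase univ _ (Finset.mem_univ i0)]
    calc ‖lam i0‖ * ∏ k ∈ univ.erase i0, ‖lam k‖
        ≤ ‖lam i0‖ * 1 := by
          refine mul_le_mul_of_nonneg_left ?_ (norm_nonneg _)
          exact Finset.prod_le_one (fun k _ => norm_nonneg _) (fun k _ => (hlam k).le)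
      _ < 1 := by rw [mul_one]; exact hlam i0
  -- leading coefficient of P is nonzero
  have hPcoeff : P.coeff n ≠ 0 := by
    have hc : P.coeff n = γ - w * ∏ k : Fin n, (-μ k) := by
      simp [hP, coeff_sub, coeff_C_mul, hAcoeff, hDcoeff]
    rw [hc]
    intro h
    have he : γ = w * ∏ k : Fin n, (-μ k) := by linear_combination h
    have habs := congrArg (‖·‖) he
    rw [hγ, norm_mul, hw, one_mul, norm_prod] at habs
    simp only [norm_neg, hμ] at habs
    rw [show (∏ k : Fin n, ‖(starRingEnd ℂ) (lam k)‖)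
        = ∏ k : Fin n, ‖lam k‖ from
      Finset.prod_congr rfl fun k _ => Complex.norm_conj _] at habs
    exact absurd habs.symm (ne_of_lt hprodlt)
  have hPne : P ≠ 0 := fun h => hPcoeff (by simp [h])
  have hPdeg : P.natDegree = n := by
    refine le_antisymm ?_ (le_natDegree_of_ne_zero hPcoeff)
    refine le_trans (natDegree_sub_le _ _) ?_
    simp only [max_le_iff]
    exact ⟨le_trans (natDegree_C_mul_le _ _) (le_of_eq hAdeg),
      le_trans (natDegree_C_mul_le _ _) hDdegle⟩
  -- every root of P lies on the unit circle
  have hroot_abs : ∀ z : ℂ, P.eval z = 0 → ‖z‖ = 1 := by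
    intro z hz
    have heq : γ * ∏ k : Fin n, (z - lam k) = w * ∏ k : Fin n, (1 - μ k * z) := by
      have := evP z; rw [hz] at this; linear_combination -this
    have habs : ∏ k : Fin n, ‖z - lam k‖
        = ∏ k : Fin n, ‖1 - μ k * z‖ := by
      have := congrArg (‖·‖) heq
      rwa [norm_mul, norm_mul, hγ, hw, one_mul, one_mul, norm_prod, norm_prod] at this
    rcases lt_trichotomy (‖z‖) 1 with hlt | heq1 | hgt
    · exfalso
      have hbpos : ∀ k : Fin n, (0:ℝ) < ‖1 - μ k * z‖ := by
        intro k
        exact norm_pos_iff.mpr (hbne z hlt.le k)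
      have hrhs : 0 < ∏ k : Fin n, ‖1 - μ k * z‖ :=
        Finset.prod_pos fun k _ => hbpos k
      have hapos : ∀ k ∈ (univ : Finset (Fin n)), (0:ℝ) < ‖z - lam k‖ := by
        intro k _
        rcases eq_or_lt_of_le (norm_nonneg (z - lam k)) with h0 | h
        · exfalso
          have : ∏ k : Fin n, ‖z - lam k‖ = 0 :=
            Finset.prod_eq_zero (Finset.mem_univ k) h0.symm
          rw [habs] at this
          exact absurd this (ne_of_gt hrhs)
        · exact h
      have := Finset.prod_lt_prod_of_nonempty hapos
        (fun k _ => blaschke_factor_lt (hlam k) hlt) (univ_nonempty_iff.mpr ⟨⟨0, hn⟩⟩)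
      rw [habs] at this
      exact lt_irrefl _ this
    · exact heq1
    · exfalso
      by_cases hDz : ∏ k : Fin n, (1 - μ k * z) = 0
      · rw [hDz, mul_zero] at heq
        have hA0 : ∏ k : Fin n, (z - lam k) = 0 :=
          (mul_eq_zero.mp heq).resolve_left hγ0
        obtain ⟨k, -, hk⟩ := Finset.prod_eq_zero_iff.mp hA0
        have hzk : z = lam k := by linear_combination hk
        rw [hzk] at hgt
        exact absurd (hlam k) (not_lt.mpr hgt.le)
      · have hbpos : ∀ k ∈ (univ : Finset (Fin n)), (0:ℝ) < ‖1 - μ k * z‖ := by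
          intro k _
          refine norm_pos_iff.mpr fun h => hDz ?_
          exact Finset.prod_eq_zero (Finset.mem_univ k) h
        have := Finset.prod_lt_prod_of_nonempty hbpos
          (fun k _ => blaschke_factor_gt (hlam k) hgt) (univ_nonempty_iff.mpr ⟨⟨0, hn⟩⟩)
        rw [habs] at this
        exact lt_irrefl _ this
  -- roots of P are exactly the solutions
  have hiff : ∀ z : ℂ, P.eval z = 0 ↔ (‖z‖ = 1 ∧ B z = w) := by
    intro z
    constructor
    · intro hz
      have habs1 := hroot_abs z hz
      refine ⟨habs1, ?_⟩
      have heq : γ * ∏ k : Fin n, (z - lam k) = w * ∏ k : Fin n, (1 - μ k * z) := by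
        have := evP z; rw [hz] at this; linear_combination -this
      have hDz : (∏ k : Fin n, (1 - (starRingEnd ℂ) (lam k) * z)) ≠ 0 :=
        Finset.prod_ne_zero_iff.mpr fun k _ => hbne z habs1.le k
      rw [hB z, Finset.prod_div_distrib, mul_div_assoc', div_eq_iff hDz]
      exact heq
    · rintro ⟨habs1, hBz⟩
      have hDz : (∏ k : Fin n, (1 - (starRingEnd ℂ) (lam k) * z)) ≠ 0 :=
        Finset.prod_ne_zero_iff.mpr fun k _ => hbne z habs1.le k
      rw [hB z, Finset.prod_div_distrib, mul_div_assoc', div_eq_iff hDz] at hBz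
      rw [evP]
      linear_combination hBz
  -- roots of P are simple
  have hsimple : ∀ z : ℂ, P.eval z = 0 → (derivative P).eval z ≠ 0 := by
    intro z hz hz'
    have habs1 := hroot_abs z hz
    have hz0 : z ≠ 0 := by intro h; rw [h] at habs1; simp at habs1
    have hzz : z * (starRingEnd ℂ) z = 1 := by
      rw [Complex.mul_conj]
      norm_cast
      rw [Complex.normSq_eq_norm_sq, habs1]; norm_num
    set a : Fin n → ℂ := fun j => z - lam j with ha
    set b : Fin n → ℂ := fun j => 1 - μ j * z with hb
    have hane : ∀ j, a j ≠ 0 := by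
      intro j h
      have : z = lam j := by linear_combination h
      rw [this] at habs1
      exact absurd habs1 (ne_of_lt (hlam j))
    have hbnej : ∀ j, b j ≠ 0 := fun j => hbne z habs1.le j
    have heq : γ * ∏ k : Fin n, a k = w * ∏ k : Fin n, b k := by
      have := evP z; rw [hz] at this; linear_combination -this
    have hprodA : ∏ k : Fin n, a k ≠ 0 := Finset.prod_ne_zero_iff.mpr fun k _ => hane k
    have hprodB : ∏ k : Fin n, b k ≠ 0 := Finset.prod_ne_zero_iff.mpr fun k _ => hbnej k
    -- derivative evaluations
    have evA' : (derivative A).eval z = ∑ j : Fin n, ∏ k ∈ univ.erase j, a k := by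
      rw [hA, derivative_finset_prod]
      simp [eval_finset_sum, eval_prod, ha]
    have evD' : (derivative D).eval z
        = ∑ j : Fin n, (∏ k ∈ univ.erase j, b k) * (-μ j) := by
      rw [hD, derivative_finset_prod]
      simp [eval_finset_sum, eval_prod, hb]
    have hErA : ∀ j : Fin n, ∏ k ∈ univ.erase j, a k = (∏ k : Fin n, a k) * (a j)⁻¹ := by
      intro j
      rw [← Finset.mul_prod_erase univ a (Finset.mem_univ j)]
      field_simp [hane j]
    have hErB : ∀ j : Fin n, ∏ k ∈ univ.erase j, b k = (∏ k : Fin n, b k) * (b j)⁻¹ := by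
      intro j
      rw [← Finset.mul_prod_erase univ b (Finset.mem_univ j)]
      field_simp [hbnej j]
    have hP' : (derivative P).eval z
        = γ * ((∏ k : Fin n, a k) * ∑ j : Fin n, (a j)⁻¹)
          - w * ((∏ k : Fin n, b k) * ∑ j : Fin n, (b j)⁻¹ * (-μ j)) := by
      rw [hP, derivative_sub, derivative_C_mul, derivative_C_mul, eval_sub, eval_mul, eval_mul,
        eval_C, eval_C, evA', evD']
      rw [show (∑ j : Fin n, ∏ k ∈ univ.erase j, a k)
          = (∏ k : Fin n, a k) * ∑ j : Fin n, (a j)⁻¹ by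
        rw [Finset.mul_sum]; exact Finset.sum_congr rfl fun j _ => hErA j]
      rw [show (∑ j : Fin n, (∏ k ∈ univ.erase j, b k) * (-μ j))
          = (∏ k : Fin n, b k) * ∑ j : Fin n, (b j)⁻¹ * (-μ j) by
        rw [Finset.mul_sum]
        refine Finset.sum_congr rfl fun j _ => ?_
        rw [hErB j]; ring]
    rw [hP'] at hz'
    -- deduce sum of logarithmic-derivative terms is zero
    have hS2 : (∑ j : Fin n, (b j)⁻¹ * (-μ j)) = -∑ j : Fin n, μ j * (b j)⁻¹ := by
      rw [← Finset.sum_neg_distrib]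
      exact Finset.sum_congr rfl fun j _ => by ring
    rw [hS2] at hz'
    have h2 : (γ * ∏ k : Fin n, a k) * (∑ j : Fin n, ((a j)⁻¹ + μ j * (b j)⁻¹)) = 0 := by
      rw [Finset.sum_add_distrib]
      linear_combination hz' + (∑ j : Fin n, μ j * (b j)⁻¹) * heq
    have hsum0 : ∑ j : Fin n, ((a j)⁻¹ + μ j * (b j)⁻¹) = 0 :=
      (mul_eq_zero.mp h2).resolve_left (mul_ne_zero hγ0 hprodA)
    -- multiply by z and take real parts
    set u : Fin n → ℂ := fun j => lam j * (starRingEnd ℂ) z with hu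
    have huabs : ∀ j, ‖u j‖ < 1 := by
      intro j
      rw [hu]
      simp only [norm_mul, Complex.norm_conj, habs1, mul_one]
      exact hlam j
    have hterm : ∀ j : Fin n, z * ((a j)⁻¹ + μ j * (b j)⁻¹)
        = (1 - u j)⁻¹ + (starRingEnd ℂ) (u j) * (1 - (starRingEnd ℂ) (u j))⁻¹ := by
      intro j
      have haj : a j = z * (1 - u j) := by
        rw [ha, hu]
        calc z - lam j = z - lam j * (z * (starRingEnd ℂ) z) := by rw [hzz]; ring
          _ = z * (1 - lam j * (starRingEnd ℂ) z) := by ring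
      have hbj : b j = 1 - (starRingEnd ℂ) (u j) := by
        rw [hb, hu, hμ]
        simp only [map_mul, Complex.conj_conj]
      have hmu : μ j * z = (starRingEnd ℂ) (u j) := by
        rw [hμ, hu]
        simp only [map_mul, Complex.conj_conj]
      have huj : (1:ℂ) - u j ≠ 0 := by
        intro h
        exact hane j (by rw [haj, h, mul_zero])
      have hsplit : z * ((a j)⁻¹ + μ j * (b j)⁻¹)
          = z * (a j)⁻¹ + (μ j * z) * (b j)⁻¹ := by ring
      rw [hsplit, hmu, hbj]
      congr 1
      rw [haj, mul_inv]
      field_simp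
    -- the sum of the terms is zero, but each has positive real part
    have hzero : ∑ j : Fin n, ((1 - u j)⁻¹
        + (starRingEnd ℂ) (u j) * (1 - (starRingEnd ℂ) (u j))⁻¹) = 0 := by
      rw [show (∑ j : Fin n, ((1 - u j)⁻¹
          + (starRingEnd ℂ) (u j) * (1 - (starRingEnd ℂ) (u j))⁻¹))
          = ∑ j : Fin n, z * ((a j)⁻¹ + μ j * (b j)⁻¹) from
        (Finset.sum_congr rfl fun j _ => (hterm j).symm)]
      rw [← Finset.mul_sum, hsum0, mul_zero]
    have hrepos : 0 < (∑ j : Fin n, ((1 - u j)⁻¹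
        + (starRingEnd ℂ) (u j) * (1 - (starRingEnd ℂ) (u j))⁻¹)).re := by
      rw [Complex.re_sum]
      exact Finset.sum_pos (fun j _ => blaschke_term_re_pos (huabs j))
        (univ_nonempty_iff.mpr ⟨⟨0, hn⟩⟩)
    rw [hzero] at hrepos
    simp at hrepos
  -- assemble the answer
  refine ⟨P.roots.toFinset, ?_, ?_⟩
  · have hnodup : P.roots.Nodup := by
      rw [Multiset.nodup_iff_count_le_one]
      intro z
      rw [Polynomial.count_roots]
      by_contra h
      push_neg at h
      obtain ⟨h1, h2⟩ := (Polynomial.one_lt_rootMultiplicity_iff_isRoot hPne).mp h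
      exact hsimple z h1 h2
    rw [Multiset.toFinset_card_of_nodup hnodup]
    have hsplits : P.Splits := IsAlgClosed.splits P
    rw [(Polynomial.splits_iff_card_roots).mp hsplits, hPdeg]
  · intro z
    rw [Multiset.mem_toFinset, Polynomial.mem_roots hPne]
    exact hiff z
end

section
/- Let a_1,…,a_n, b_1,…,b_n, c_0 be points on the unit circle in the strict cyclic order a_1 ≺ b_1 ≺ a_2 ≺ … ≺ a_n ≺ b_n, with b_{k−1} ≺ c_0 ≺ a_k for some k, and let a, b, c be unimodular with cyclic order a ≺ b ≺ c ≺ a. Then there exists at most one Blaschke product B of degree n with B(a_k) = a, B(b_k) = b for all k and B(c_0) = c. -/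
open Finset Real

/-- A Blaschke product of degree `n`, as a function `ℂ → ℂ`. -/
def IsBlaschkeProduct (n : ℕ) (B : ℂ → ℂ) : Prop :=
  ∃ (γ : ℂ) (lam : Fin n → ℂ), ‖γ‖ = 1 ∧ (∀ k, ‖lam k‖ < 1) ∧
    ∀ z : ℂ, B z = γ * ∏ k : Fin n, (z - lam k) / (1 - (starRingEnd ℂ) (lam k) * z)

lemma exp_inj_aux (x y : ℝ) (h : |x - y| < 2*π) (he : Complex.exp (x*Complex.I) = Complex.exp (y*Complex.I)) : x = y := by
  rw [Complex.exp_eq_exp_iff_exists_int] at he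
  obtain ⟨m, hm⟩ := he
  have h2 : ((x:ℂ) - y - m*(2*π)) * Complex.I = 0 := by
    push_cast at hm ⊢; linear_combination hm
  rcases mul_eq_zero.mp h2 with h3 | h3
  · have h4 : x - y - m*(2*π) = 0 := by
      have := congrArg Complex.re h3
      push_cast at this
      simpa using this
    have hπ : (0:ℝ) < π := Real.pi_pos
    have hm0 : m = 0 := by
      by_contra hm0
      have h5 : (1:ℝ) ≤ |(m:ℝ)| := by
        exact_mod_cast Int.one_le_abs (by omega : m ≠ 0)  -- maybe wrong
      have h6 : |x - y| = |(m:ℝ)| * (2*π) := by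
        rw [show x - y = (m:ℝ)*(2*π) by linarith, abs_mul,
          abs_of_pos (show (0:ℝ) < 2*π by linarith)]
      nlinarith
    rw [hm0] at h4; push_cast at h4; linarith
  · exact absurd h3 Complex.I_ne_zero

lemma abs_gt_one_of_denom_zero {l z : ℂ} (hl : ‖l‖ < 1)
    (h : 1 - (starRingEnd ℂ) l * z = 0) : 1 < ‖z‖ := by
  have h1 : (starRingEnd ℂ) l * z = 1 := by linear_combination -h
  have h2 : ‖l‖ * ‖z‖ = 1 := by
    have := congrArg norm h1
    simpa [map_mul, Complex.norm_conj] using this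
  have hz : ‖z‖ ≠ 0 := by
    intro hz0; rw [hz0, mul_zero] at h2; norm_num at h2
  have hz' : 0 < ‖z‖ := lt_of_le_of_ne (norm_nonneg z) (Ne.symm hz)
  nlinarith

lemma num_ne_zero {n : ℕ} (l : Fin n → ℂ) (hl : ∀ k, ‖l k‖ < 1)
    {z : ℂ} (hz : 1 < ‖z‖) : (∏ k : Fin n, (z - l k)) ≠ 0 := by
  rw [Finset.prod_ne_zero_iff]
  intro k _ h
  have : z = l k := by linear_combination h
  rw [this] at hz
  exact absurd (hl k) (by linarith)

lemma blaschke_eq_of_identity {n : ℕ} (γ₁ γ₂ : ℂ) (l₁ l₂ : Fin n → ℂ)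
    (hγ₁ : ‖γ₁‖ = 1) (hγ₂ : ‖γ₂‖ = 1)
    (hl₁ : ∀ k, ‖l₁ k‖ < 1) (hl₂ : ∀ k, ‖l₂ k‖ < 1)
    (hid : ∀ z : ℂ, γ₁ * (∏ k : Fin n, (z - l₁ k)) * (∏ k : Fin n, (1 - (starRingEnd ℂ) (l₂ k) * z))
      = γ₂ * (∏ k : Fin n, (z - l₂ k)) * (∏ k : Fin n, (1 - (starRingEnd ℂ) (l₁ k) * z)))
    (z : ℂ) :
    γ₁ * ∏ k : Fin n, (z - l₁ k) / (1 - (starRingEnd ℂ) (l₁ k) * z)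
      = γ₂ * ∏ k : Fin n, (z - l₂ k) / (1 - (starRingEnd ℂ) (l₂ k) * z) := by
  have hγ₁0 : γ₁ ≠ 0 := by intro h; rw [h] at hγ₁; simp at hγ₁
  have hγ₂0 : γ₂ ≠ 0 := by intro h; rw [h] at hγ₂; simp at hγ₂
  by_cases h1 : ∃ k, 1 - (starRingEnd ℂ) (l₁ k) * z = 0
  · obtain ⟨k₀, hk₀⟩ := h1
    have hzgt : 1 < ‖z‖ := abs_gt_one_of_denom_zero (hl₁ k₀) hk₀
    have hQ1 : (∏ k : Fin n, (1 - (starRingEnd ℂ) (l₁ k) * z)) = 0 :=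
      Finset.prod_eq_zero (Finset.mem_univ k₀) hk₀
    have hQ2 : (∏ k : Fin n, (1 - (starRingEnd ℂ) (l₂ k) * z)) = 0 := by
      have h := hid z
      rw [hQ1, mul_zero] at h
      rcases mul_eq_zero.mp h with h' | h'
      · rcases mul_eq_zero.mp h' with h'' | h''
        · exact absurd h'' hγ₁0
        · exact absurd h'' (num_ne_zero l₁ hl₁ hzgt)
      · exact h'
    obtain ⟨j, _, hj⟩ := Finset.prod_eq_zero_iff.mp hQ2
    have hL : (∏ k : Fin n, (z - l₁ k) / (1 - (starRingEnd ℂ) (l₁ k) * z)) = 0 :=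
      Finset.prod_eq_zero (Finset.mem_univ k₀) (by rw [hk₀, div_zero])
    have hR : (∏ k : Fin n, (z - l₂ k) / (1 - (starRingEnd ℂ) (l₂ k) * z)) = 0 :=
      Finset.prod_eq_zero (Finset.mem_univ j) (by rw [hj, div_zero])
    rw [hL, hR, mul_zero, mul_zero]
  · by_cases h2 : ∃ k, 1 - (starRingEnd ℂ) (l₂ k) * z = 0
    · obtain ⟨k₀, hk₀⟩ := h2
      have hzgt : 1 < ‖z‖ := abs_gt_one_of_denom_zero (hl₂ k₀) hk₀
      have hQ2 : (∏ k : Fin n, (1 - (starRingEnd ℂ) (l₂ k) * z)) = 0 :=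
        Finset.prod_eq_zero (Finset.mem_univ k₀) hk₀
      have hQ1 : (∏ k : Fin n, (1 - (starRingEnd ℂ) (l₁ k) * z)) = 0 := by
        have h := hid z
        rw [hQ2, mul_zero] at h
        rcases mul_eq_zero.mp h.symm with h' | h'
        · rcases mul_eq_zero.mp h' with h'' | h''
          · exact absurd h'' hγ₂0
          · exact absurd h'' (num_ne_zero l₂ hl₂ hzgt)
        · exact h'
      obtain ⟨j, _, hj⟩ := Finset.prod_eq_zero_iff.mp hQ1
      exact absurd hj (by push_neg at h1; exact h1 j)
    · push_neg at h1 h2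
      rw [Finset.prod_div_distrib, Finset.prod_div_distrib]
      have hD1 : (∏ k : Fin n, (1 - (starRingEnd ℂ) (l₁ k) * z)) ≠ 0 :=
        Finset.prod_ne_zero_iff.mpr fun k _ => h1 k
      have hD2 : (∏ k : Fin n, (1 - (starRingEnd ℂ) (l₂ k) * z)) ≠ 0 :=
        Finset.prod_ne_zero_iff.mpr fun k _ => h2 k
      rw [mul_div_assoc', mul_div_assoc', div_eq_div_iff hD1 hD2]
      linear_combination hid z

section
open Polynomial

lemma cross_identity {n : ℕ} (γ₁ γ₂ : ℂ) (l₁ l₂ : Fin n → ℂ)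
    (f : Fin (2*n+1) → ℂ) (hf : Function.Injective f)
    (hev : ∀ i, γ₁ * (∏ k : Fin n, (f i - l₁ k)) * (∏ k : Fin n, (1 - (starRingEnd ℂ) (l₂ k) * f i))
      = γ₂ * (∏ k : Fin n, (f i - l₂ k)) * (∏ k : Fin n, (1 - (starRingEnd ℂ) (l₁ k) * f i))) :
    ∀ z : ℂ, γ₁ * (∏ k : Fin n, (z - l₁ k)) * (∏ k : Fin n, (1 - (starRingEnd ℂ) (l₂ k) * z))
      = γ₂ * (∏ k : Fin n, (z - l₂ k)) * (∏ k : Fin n, (1 - (starRingEnd ℂ) (l₁ k) * z)) := by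
  set P : Polynomial ℂ :=
    C γ₁ * (∏ k : Fin n, (X - C (l₁ k))) * (∏ k : Fin n, (1 - C ((starRingEnd ℂ) (l₂ k)) * X))
      - C γ₂ * (∏ k : Fin n, (X - C (l₂ k))) * (∏ k : Fin n, (1 - C ((starRingEnd ℂ) (l₁ k)) * X))
    with hP
  have hPeval : ∀ z : ℂ, P.eval z =
      γ₁ * (∏ k : Fin n, (z - l₁ k)) * (∏ k : Fin n, (1 - (starRingEnd ℂ) (l₂ k) * z))
      - γ₂ * (∏ k : Fin n, (z - l₂ k)) * (∏ k : Fin n, (1 - (starRingEnd ℂ) (l₁ k) * z)) := by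
    intro z
    simp [hP, eval_prod]
  have hdN : ∀ (l : Fin n → ℂ), (∏ k : Fin n, (X - C (l k))).natDegree ≤ n := by
    intro l
    refine (natDegree_prod_le _ _).trans ?_
    have h : ∀ k ∈ (Finset.univ : Finset (Fin n)), (X - C (l k)).natDegree ≤ 1 :=
      fun k _ => le_of_eq (natDegree_X_sub_C (l k))
    exact le_trans (Finset.sum_le_sum h) (by simp)
  have hdQ : ∀ (l : Fin n → ℂ), (∏ k : Fin n, ((1:ℂ[X]) - C ((starRingEnd ℂ) (l k)) * X)).natDegree ≤ n := by
    intro l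
    refine (natDegree_prod_le _ _).trans ?_
    have h : ∀ k ∈ (Finset.univ : Finset (Fin n)), ((1:ℂ[X]) - C ((starRingEnd ℂ) (l k)) * X).natDegree ≤ 1 := by
      intro k _
      refine (natDegree_sub_le _ _).trans (max_le (by simp) ?_)
      exact (natDegree_C_mul_le _ _).trans (by simp)
    exact le_trans (Finset.sum_le_sum h) (by simp)
  have hb : ∀ (γ : ℂ) (la lb : Fin n → ℂ),
      ((C γ * ∏ k : Fin n, (X - C (la k))) * ∏ k : Fin n, ((1:ℂ[X]) - C ((starRingEnd ℂ) (lb k)) * X)).natDegree ≤ 2*n := by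
    intro γ la lb
    calc ((C γ * ∏ k : Fin n, (X - C (la k))) * ∏ k : Fin n, ((1:ℂ[X]) - C ((starRingEnd ℂ) (lb k)) * X)).natDegree
        ≤ (C γ * ∏ k : Fin n, (X - C (la k))).natDegree
          + (∏ k : Fin n, ((1:ℂ[X]) - C ((starRingEnd ℂ) (lb k)) * X)).natDegree := natDegree_mul_le
      _ ≤ ((C γ).natDegree + (∏ k : Fin n, (X - C (la k))).natDegree) + n :=
          add_le_add natDegree_mul_le (hdQ lb)
      _ ≤ (0 + n) + n := add_le_add (add_le_add (le_of_eq (natDegree_C γ)) (hdN la)) le_rfl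
      _ = 2*n := by omega
  have hdeg : P.natDegree ≤ 2*n :=
    (natDegree_sub_le _ _).trans (max_le (hb γ₁ l₁ l₂) (hb γ₂ l₂ l₁))
  have hP0 : P = 0 := by
    refine Polynomial.eq_zero_of_natDegree_lt_card_of_eval_eq_zero P hf (fun i => ?_) ?_
    · rw [hPeval]; rw [hev i]; ring
    · rw [Fintype.card_fin]; omega
  intro z
  have := hPeval z
  rw [hP0, eval_zero] at this
  linear_combination -this

end

lemma abs_gt_one_of_denom_zero' {l z : ℂ} (hl : ‖l‖ < 1)
    (h : 1 - (starRingEnd ℂ) l * z = 0) : 1 < ‖z‖ := by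
  have h1 : (starRingEnd ℂ) l * z = 1 := by linear_combination -h
  have h2 : ‖l‖ * ‖z‖ = 1 := by
    have := congrArg norm h1
    simpa [map_mul, Complex.norm_conj] using this
  have hz : ‖z‖ ≠ 0 := by
    intro hz0; rw [hz0, mul_zero] at h2; norm_num at h2
  have hz' : 0 < ‖z‖ := lt_of_le_of_ne (norm_nonneg z) (Ne.symm hz)
  nlinarith

lemma cross_at_point {n : ℕ} (γ₁ γ₂ : ℂ) (l₁ l₂ : Fin n → ℂ)
    (hl₁ : ∀ k, ‖l₁ k‖ < 1) (hl₂ : ∀ k, ‖l₂ k‖ < 1)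
    (z : ℂ) (hz : ‖z‖ = 1)
    (heq : γ₁ * ∏ k : Fin n, (z - l₁ k) / (1 - (starRingEnd ℂ) (l₁ k) * z)
      = γ₂ * ∏ k : Fin n, (z - l₂ k) / (1 - (starRingEnd ℂ) (l₂ k) * z)) :
    γ₁ * (∏ k : Fin n, (z - l₁ k)) * (∏ k : Fin n, (1 - (starRingEnd ℂ) (l₂ k) * z))
      = γ₂ * (∏ k : Fin n, (z - l₂ k)) * (∏ k : Fin n, (1 - (starRingEnd ℂ) (l₁ k) * z)) := by
  have hd1 : ∀ k, 1 - (starRingEnd ℂ) (l₁ k) * z ≠ 0 := by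
    intro k h
    have := abs_gt_one_of_denom_zero' (hl₁ k) h
    rw [hz] at this; linarith
  have hd2 : ∀ k, 1 - (starRingEnd ℂ) (l₂ k) * z ≠ 0 := by
    intro k h
    have := abs_gt_one_of_denom_zero' (hl₂ k) h
    rw [hz] at this; linarith
  rw [Finset.prod_div_distrib, Finset.prod_div_distrib] at heq
  have hD1 : (∏ k : Fin n, (1 - (starRingEnd ℂ) (l₁ k) * z)) ≠ 0 :=
    Finset.prod_ne_zero_iff.mpr fun k _ => hd1 k
  have hD2 : (∏ k : Fin n, (1 - (starRingEnd ℂ) (l₂ k) * z)) ≠ 0 :=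
    Finset.prod_ne_zero_iff.mpr fun k _ => hd2 k
  rw [mul_div_assoc', mul_div_assoc', div_eq_div_iff hD1 hD2] at heq
  linear_combination heq

/-- Uniqueness in the boundary interpolation problem: given points
`a_1 ≺ b_1 ≺ a_2 ≺ … ≺ a_n ≺ b_n` on the unit circle in strict cyclic order
(encoded by strictly increasing angles `α_k, β_k`), a point `c₀` lying on one of the
arcs `(b_{k-1}, a_k)`, and target values `a ≺ b ≺ c ≺ a` on the circle, there is at
most one Blaschke product `B` of degree `n` with `B(a_k) = a`, `B(b_k) = b` for all `k`
and `B(c₀) = c`. -/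
theorem blaschke_boundary_interpolation_unique (n : ℕ) (hn : 1 ≤ n)
    (α β : ℕ → ℝ)
    (hinter1 : ∀ k, k < n → α k < β k)
    (hinter2 : ∀ k, k + 1 < n → β k < α (k + 1))
    (hwrap : β (n - 1) < α 0 + 2 * π)
    (γ₀ : ℝ)
    (hc₀ : (∃ k, 1 ≤ k ∧ k < n ∧ β (k - 1) < γ₀ ∧ γ₀ < α k) ∨
      (β (n - 1) < γ₀ ∧ γ₀ < α 0 + 2 * π))
    (a b c : ℂ) (u v w : ℝ)
    (ha : a = Complex.exp (u * Complex.I)) (hb : b = Complex.exp (v * Complex.I))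
    (hc : c = Complex.exp (w * Complex.I))
    (hcyc : u < v ∧ v < w ∧ w < u + 2 * π)
    (B₁ B₂ : ℂ → ℂ) (hB₁ : IsBlaschkeProduct n B₁) (hB₂ : IsBlaschkeProduct n B₂)
    (hB₁a : ∀ k, k < n → B₁ (Complex.exp (α k * Complex.I)) = a)
    (hB₁b : ∀ k, k < n → B₁ (Complex.exp (β k * Complex.I)) = b)
    (hB₁c : B₁ (Complex.exp (γ₀ * Complex.I)) = c)
    (hB₂a : ∀ k, k < n → B₂ (Complex.exp (α k * Complex.I)) = a)
    (hB₂b : ∀ k, k < n → B₂ (Complex.exp (β k * Complex.I)) = b)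
    (hB₂c : B₂ (Complex.exp (γ₀ * Complex.I)) = c) :
    ∀ z : ℂ, B₁ z = B₂ z := by
  classical
  obtain ⟨γ₁, l₁, hγ₁, hl₁, hB₁def⟩ := hB₁
  obtain ⟨γ₂, l₂, hγ₂, hl₂, hB₂def⟩ := hB₂
  have hπ : (0:ℝ) < π := Real.pi_pos
  -- chain inequalities
  have key : ∀ l k, l < n → k < l → β k < α l := by
    intro l
    induction l with
    | zero => intro k _ h; omega
    | succ m ih =>
      intro k hl hkl
      rcases Nat.lt_succ_iff_lt_or_eq.mp hkl with h | h
      · have h1 := ih k (by omega) h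
        have h2 := hinter1 m (by omega)
        have h3 := hinter2 m hl
        linarith
      · subst h; exact hinter2 k hl
  have hαmono : ∀ k l, l < n → k < l → α k < α l := by
    intro k l hl hkl
    have h1 := hinter1 k (by omega)
    have h2 := key l k hl hkl
    linarith
  have hβmono : ∀ k l, l < n → k < l → β k < β l := by
    intro k l hl hkl
    have h1 := hinter1 l hl
    have h2 := key l k hl hkl
    linarith
  have hαβlt : ∀ k l, k ≤ l → l < n → α k < β l := by
    intro k l hkl hl
    rcases eq_or_lt_of_le hkl with h | h
    · subst h; exact hinter1 k hl
    · have := hαmono k l hl h; have := hinter1 l hl; linarith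
  have hβtop : ∀ k, k < n → β k ≤ β (n-1) := by
    intro k hk
    rcases eq_or_lt_of_le (by omega : k ≤ n-1) with h | h
    · subst h; exact le_rfl
    · exact le_of_lt (hβmono k (n-1) (by omega) h)
  have hα0 : ∀ k, k < n → α 0 ≤ α k := by
    intro k hk
    rcases Nat.eq_zero_or_pos k with h | h
    · subst h; exact le_rfl
    · exact le_of_lt (hαmono 0 k hk h)
  -- γ₀ separation and bounds
  have hγsep : ∀ k, k < n → (β k < γ₀ ∨ γ₀ < α k) := by
    rcases hc₀ with ⟨j, hj1, hjn, hL, hR⟩ | ⟨hL, hR⟩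
    · intro k hk
      rcases lt_or_ge k j with h | h
      · left
        have hkle : k ≤ j - 1 := by omega
        rcases eq_or_lt_of_le hkle with h' | h'
        · rw [h']; exact hL
        · have := hβmono k (j-1) (by omega) h'; linarith
      · right
        rcases eq_or_lt_of_le h with h' | h'
        · rw [← h']; exact hR
        · have := hαmono j k hk h'; linarith
    · intro k hk
      left
      have := hβtop k hk
      linarith
  have hγlow : α 0 < γ₀ := by
    rcases hc₀ with ⟨j, hj1, hjn, hL, hR⟩ | ⟨hL, hR⟩
    · have h1 : α 0 ≤ α (j-1) := hα0 (j-1) (by omega)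
      have h2 : α (j-1) < β (j-1) := hinter1 (j-1) (by omega)
      linarith
    · have h1 : α 0 ≤ α (n-1) := hα0 (n-1) (by omega)
      have h2 : α (n-1) < β (n-1) := hinter1 (n-1) (by omega)
      linarith
  have hγhigh : γ₀ < α 0 + 2*π := by
    rcases hc₀ with ⟨j, hj1, hjn, hL, hR⟩ | ⟨hL, hR⟩
    · have h1 : α j < β j := hinter1 j hjn
      have h2 : β j ≤ β (n-1) := hβtop j hjn
      linarith
    · exact hR
  -- the angle function
  set θ : ℕ → ℝ := fun i => if i < n then α i else if i < 2*n then β (i - n) else γ₀ with hθdef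
  have hθval1 : ∀ i : ℕ, i < n → θ i = α i := by
    intro i hi; simp only [hθdef]; rw [if_pos hi]
  have hθval2 : ∀ i : ℕ, n ≤ i → i < 2*n → θ i = β (i - n) := by
    intro i h1 h2; simp only [hθdef]; rw [if_neg (by omega), if_pos h2]
  have hθval3 : ∀ i : ℕ, 2*n ≤ i → θ i = γ₀ := by
    intro i h1; simp only [hθdef]; rw [if_neg (by omega), if_neg (by omega)]
  have hθrange : ∀ i, i < 2*n+1 → α 0 ≤ θ i ∧ θ i < α 0 + 2*π := by
    intro i hi
    rcases Nat.lt_or_ge i n with h1 | h1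
    · rw [hθval1 i h1]
      refine ⟨hα0 i h1, ?_⟩
      have := hinter1 i h1; have := hβtop i h1; linarith
    · rcases Nat.lt_or_ge i (2*n) with h2 | h2
      · rw [hθval2 i h1 h2]
        have hin : i - n < n := by omega
        constructor
        · have := hα0 (i-n) hin; have := hinter1 (i-n) hin; linarith
        · have := hβtop (i-n) hin; linarith
      · rw [hθval3 i h2]
        exact ⟨le_of_lt hγlow, hγhigh⟩
  have hγneα : ∀ k, k < n → γ₀ ≠ α k := by
    intro k hk
    rcases hγsep k hk with h | h
    · have := hinter1 k hk; intro he; linarith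
    · exact ne_of_lt h
  have hγneβ : ∀ k, k < n → γ₀ ≠ β k := by
    intro k hk
    rcases hγsep k hk with h | h
    · exact ne_of_gt h
    · have := hinter1 k hk; intro he; linarith
  have hαβne : ∀ k l, k < n → l < n → α k ≠ β l := by
    intro k l hk hl
    rcases le_or_gt k l with h | h
    · exact ne_of_lt (hαβlt k l h hl)
    · exact ne_of_gt (key k l hk h)
  have hθne : ∀ i j : ℕ, i < 2*n+1 → j < 2*n+1 → i ≠ j → θ i ≠ θ j := by
    intro i j hi hj hij
    rcases Nat.lt_or_ge i n with hi1 | hi1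
    · rcases Nat.lt_or_ge j n with hj1 | hj1
      · rw [hθval1 i hi1, hθval1 j hj1]
        rcases lt_or_gt_of_ne hij with h | h
        · exact ne_of_lt (hαmono i j hj1 h)
        · exact ne_of_gt (hαmono j i hi1 h)
      · rcases Nat.lt_or_ge j (2*n) with hj2 | hj2
        · rw [hθval1 i hi1, hθval2 j hj1 hj2]
          exact hαβne i (j-n) hi1 (by omega)
        · rw [hθval1 i hi1, hθval3 j hj2]
          exact fun h => hγneα i hi1 h.symm
    · rcases Nat.lt_or_ge i (2*n) with hi2 | hi2
      · rcases Nat.lt_or_ge j n with hj1 | hj1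
        · rw [hθval2 i hi1 hi2, hθval1 j hj1]
          exact fun h => hαβne j (i-n) hj1 (by omega) h.symm
        · rcases Nat.lt_or_ge j (2*n) with hj2 | hj2
          · rw [hθval2 i hi1 hi2, hθval2 j hj1 hj2]
            have hne : i - n ≠ j - n := by omega
            rcases lt_or_gt_of_ne hne with h | h
            · exact ne_of_lt (hβmono (i-n) (j-n) (by omega) h)
            · exact ne_of_gt (hβmono (j-n) (i-n) (by omega) h)
          · rw [hθval2 i hi1 hi2, hθval3 j hj2]
            exact fun h => hγneβ (i-n) (by omega) h.symm
      · rcases Nat.lt_or_ge j n with hj1 | hj1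
        · rw [hθval3 i hi2, hθval1 j hj1]
          exact hγneα j hj1
        · rcases Nat.lt_or_ge j (2*n) with hj2 | hj2
          · rw [hθval3 i hi2, hθval2 j hj1 hj2]
            exact hγneβ (j-n) (by omega)
          · omega
  -- the interpolation points
  set f : Fin (2*n+1) → ℂ := fun i => Complex.exp ((θ i : ℂ) * Complex.I) with hfdef
  have hfinj : Function.Injective f := by
    intro i j hfij
    by_contra hij
    have hij' : (i : ℕ) ≠ (j : ℕ) := fun h => hij (Fin.ext h)
    have hne := hθne i j i.isLt j.isLt hij'
    have hri := hθrange i i.isLt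
    have hrj := hθrange j j.isLt
    have habs : |θ i - θ j| < 2*π := by
      rw [abs_sub_lt_iff]; constructor <;> linarith
    exact hne (exp_inj_aux (θ i) (θ j) habs hfij)
  have hzabs : ∀ i : Fin (2*n+1), ‖f i‖ = 1 := by
    intro i
    simp only [hfdef]
    exact Complex.norm_exp_ofReal_mul_I (θ i)
  have hBeq : ∀ i : Fin (2*n+1), B₁ (f i) = B₂ (f i) := by
    intro i
    have hi := i.isLt
    simp only [hfdef]
    rcases Nat.lt_or_ge (i : ℕ) n with h1 | h1
    · rw [hθval1 i h1, hB₁a i h1, hB₂a i h1]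
    · rcases Nat.lt_or_ge (i : ℕ) (2*n) with h2 | h2
      · rw [hθval2 i h1 h2, hB₁b ((i : ℕ)-n) (by omega), hB₂b ((i : ℕ)-n) (by omega)]
      · rw [hθval3 i h2, hB₁c, hB₂c]
  have hev : ∀ i : Fin (2*n+1),
      γ₁ * (∏ k : Fin n, (f i - l₁ k)) * (∏ k : Fin n, (1 - (starRingEnd ℂ) (l₂ k) * f i))
        = γ₂ * (∏ k : Fin n, (f i - l₂ k)) * (∏ k : Fin n, (1 - (starRingEnd ℂ) (l₁ k) * f i)) := by
    intro i
    refine cross_at_point γ₁ γ₂ l₁ l₂ hl₁ hl₂ (f i) (hzabs i) ?_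
    rw [← hB₁def (f i), ← hB₂def (f i)]
    exact hBeq i
  have hid := cross_identity γ₁ γ₂ l₁ l₂ f hfinj hev
  intro z
  rw [hB₁def z, hB₂def z]
  exact blaschke_eq_of_identity γ₁ γ₂ l₁ l₂ hγ₁ hγ₂ hl₁ hl₂ hid z
end
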